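/- If Player II has a winning strategy in the anti-localizing* game with respect to a family A ⊆ ω^ω, then |A| = 𝔠. -/

import Mathlib

open Cardinal

/-- `φ` is a slalom: `φ(n)` is a set of `n+1` naturals. -/
def IsSlalom (φ : ℕ → Finset ℕ) : Prop := ∀ n, (φ n).card = n + 1

/-- Player II has a winning strategy in the anti-localizing* game with respect to `A`:
Player I plays `a k ∈ [ω]^{k+1}`, Player II responds with naturals; Player II wins
if the sequence of Player II's moves is in `A` and escapes the slalom infinitely often. -/
def IIWinStratAntiLocStar (A : Set (ℕ → ℕ)) : Prop :=
  ∃ τ : List (Finset ℕ) → ℕ, ∀ a : ℕ → Finset ℕ, IsSlalom a →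
    (fun k => τ ((List.range (k + 1)).map a)) ∈ A ∧
    {k | τ ((List.range (k + 1)).map a) ∉ a k}.Infinite

namespace AntiLoc

variable (τ : List (Finset ℕ) → ℕ)

/-- Player II's moves when I plays the slalom `a`. -/
def Fout (a : ℕ → Finset ℕ) (k : ℕ) : ℕ := τ ((List.range (k + 1)).map a)

lemma Fout_congr {a b : ℕ → Finset ℕ} {k : ℕ} (h : ∀ i ≤ k, a i = b i) :
    Fout τ a k = Fout τ b k := by
  unfold Fout
  congr 1
  refine List.map_congr_left fun i hi => ?_
  exact h i (Nat.lt_succ_iff.mp (List.mem_range.mp hi))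

/-- The splitting lemma: if II's strategy wins (escapes infinitely often) against every
slalom, then any slalom can be modified beyond `m` so that the outcome changes. -/
lemma split (hwin : ∀ a, IsSlalom a → {k | Fout τ a k ∉ a k}.Infinite)
    (a : ℕ → Finset ℕ) (ha : IsSlalom a) (m : ℕ) :
    ∃ bk : (ℕ → Finset ℕ) × ℕ, IsSlalom bk.1 ∧ (∀ i < m, bk.1 i = a i) ∧
      Fout τ bk.1 bk.2 ≠ Fout τ a bk.2 := by
  by_contra hcon
  push_neg at hcon
  -- the bad slalom that swallows all of II's (unchanging) responses beyond m
  set f := Fout τ a with hf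
  set c : ℕ → Finset ℕ :=
    fun k => if k < m then a k else insert (f k) ((Finset.range k).image fun j => f k + j + 1)
    with hc
  have hcard : ∀ k, ¬ k < m → (c k).card = k + 1 := by
    intro k hk
    have hnotmem : f k ∉ (Finset.range k).image fun j => f k + j + 1 := by
      simp only [Finset.mem_image, Finset.mem_range]
      rintro ⟨j, _, hj⟩; omega
    have hinj : Set.InjOn (fun j => f k + j + 1) (Finset.range k) := by
      intro x _ y _ hxy; simp only at hxy; omega
    simp [hc, hk, Finset.card_insert_of_notMem hnotmem, Finset.card_image_of_injOn hinj]
  have hcs : IsSlalom c := by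
    intro k
    by_cases hk : k < m
    · simpa [hc, hk] using ha k
    · exact hcard k hk
  have hagree : ∀ i < m, c i = a i := fun i hi => by simp [hc, hi]
  have hsame : ∀ k, Fout τ c k = Fout τ a k := fun k => hcon (c, k) hcs hagree
  have hsub : {k | Fout τ c k ∉ c k} ⊆ Set.Iio m := by
    intro k hk
    by_contra hkm
    simp only [Set.mem_Iio] at hkm
    apply hk
    rw [hsame k]
    simp [hc, if_neg hkm]
    exact Or.inl rfl
  exact (hwin c hcs).mono hsub (Set.finite_Iio m)

variable (hwin : ∀ a, IsSlalom a → {k | Fout τ a k ∉ a k}.Infinite)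

/-- Nodes of the perfect tree of slaloms: a slalom together with a "settled" length.
The list is read with the most recent choice first. -/
noncomputable def node : List Bool → {a : ℕ → Finset ℕ // IsSlalom a} × ℕ
  | [] => (⟨fun k => Finset.range (k + 1), fun k => by simp⟩, 0)
  | (i :: s) =>
      let p := node s
      let bk := (split τ hwin p.1.1 p.1.2 p.2).choose
      (if i then ⟨bk.1, (split τ hwin p.1.1 p.1.2 p.2).choose_spec.1⟩ else p.1,
        max (p.2 + 1) (bk.2 + 1))

lemma node_snd_lt (i : Bool) (s : List Bool) :
    (node τ hwin s).2 < (node τ hwin (i :: s)).2 := by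
  rw [node]; exact lt_of_lt_of_le (Nat.lt_succ_self _) (le_max_left _ _)

lemma node_agree (i : Bool) (s : List Bool) :
    ∀ n < (node τ hwin s).2, (node τ hwin (i :: s)).1.1 n = (node τ hwin s).1.1 n := by
  intro n hn
  rw [node]
  cases i with
  | false => simp
  | true => simpa using (split τ hwin _ (node τ hwin s).1.2 _).choose_spec.2.1 n hn

lemma node_split (s : List Bool) :
    ∃ k, k < (node τ hwin (true :: s)).2 ∧ k < (node τ hwin (false :: s)).2 ∧
      Fout τ (node τ hwin (true :: s)).1.1 k ≠ Fout τ (node τ hwin (false :: s)).1.1 k := by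
  refine ⟨(split τ hwin (node τ hwin s).1.1 (node τ hwin s).1.2 (node τ hwin s).2).choose.2,
    ?_, ?_, ?_⟩
  · rw [node]; exact lt_of_lt_of_le (Nat.lt_succ_self _) (le_max_right _ _)
  · rw [node]; exact lt_of_lt_of_le (Nat.lt_succ_self _) (le_max_right _ _)
  · have h := (split τ hwin (node τ hwin s).1.1 (node τ hwin s).1.2 (node τ hwin s).2).choose_spec.2.2
    rw [node, node]
    simpa using h

lemma node_snd_le_append (u s : List Bool) :
    (node τ hwin s).2 ≤ (node τ hwin (u ++ s)).2 := by
  induction u with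
  | nil => simp
  | cons i u ih => exact ih.trans (node_snd_lt τ hwin i (u ++ s)).le

lemma node_agree_append (u s : List Bool) :
    ∀ n < (node τ hwin s).2, (node τ hwin (u ++ s)).1.1 n = (node τ hwin s).1.1 n := by
  induction u with
  | nil => simp
  | cons i u ih =>
    intro n hn
    rw [List.cons_append, node_agree τ hwin i (u ++ s) n
      (lt_of_lt_of_le hn (node_snd_le_append τ hwin u s))]
    exact ih n hn

lemma node_snd_ge_length (s : List Bool) : s.length ≤ (node τ hwin s).2 := by
  induction s with
  | nil => simp
  | cons i s ih => exact lt_of_le_of_lt ih (node_snd_lt τ hwin i s)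

/-- The initial segment of a branch, most recent choice first. -/
def seg (x : ℕ → Bool) : ℕ → List Bool
  | 0 => []
  | n + 1 => x n :: seg x n

lemma seg_length (x : ℕ → Bool) (n : ℕ) : (seg x n).length = n := by
  induction n with
  | zero => rfl
  | succ n ih => simp [seg, ih]

lemma seg_append (x : ℕ → Bool) {ℓ n : ℕ} (h : ℓ ≤ n) :
    ∃ u, seg x n = u ++ seg x ℓ := by
  induction n with
  | zero => exact ⟨[], by simpa using (Nat.le_zero.mp h) ▸ rfl⟩
  | succ n ih =>
    rcases Nat.lt_or_ge ℓ (n + 1) with h' | h'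
    · obtain ⟨u, hu⟩ := ih (Nat.lt_succ_iff.mp h')
      exact ⟨x n :: u, by simp [seg, hu]⟩
    · have : ℓ = n + 1 := le_antisymm h h'
      exact ⟨[], by simp [this]⟩

lemma seg_eq (x y : ℕ → Bool) {ℓ : ℕ} (h : ∀ i < ℓ, x i = y i) :
    seg x ℓ = seg y ℓ := by
  induction ℓ with
  | zero => rfl
  | succ n ih =>
    simp only [seg]
    refine congrArg₂ _ (h n (Nat.lt_succ_self n)) (ih fun i hi => h i (hi.trans (Nat.lt_succ_self n)))

/-- The limit slalom along a branch. -/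
noncomputable def branch (x : ℕ → Bool) (n : ℕ) : Finset ℕ :=
  (node τ hwin (seg x (n + 1))).1.1 n

lemma branch_slalom (x : ℕ → Bool) : IsSlalom (branch τ hwin x) :=
  fun n => (node τ hwin (seg x (n + 1))).1.2 n

lemma branch_agree (x : ℕ → Bool) (ℓ : ℕ) :
    ∀ n < (node τ hwin (seg x ℓ)).2, branch τ hwin x n = (node τ hwin (seg x ℓ)).1.1 n := by
  intro n hn
  rcases le_or_gt (n + 1) ℓ with h | h
  · obtain ⟨u, hu⟩ := seg_append x h
    have hn' : n < (node τ hwin (seg x (n + 1))).2 := by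
      have hge := node_snd_ge_length τ hwin (seg x (n + 1))
      rw [seg_length] at hge
      exact lt_of_lt_of_le (Nat.lt_succ_self n) hge
    rw [branch, hu, node_agree_append τ hwin u (seg x (n+1)) n hn']
  · obtain ⟨u, hu⟩ := seg_append x h.le
    rw [branch, hu, node_agree_append τ hwin u (seg x ℓ) n hn]

lemma branch_Fout (x : ℕ → Bool) (ℓ k : ℕ) (hk : k < (node τ hwin (seg x ℓ)).2) :
    Fout τ (branch τ hwin x) k = Fout τ (node τ hwin (seg x ℓ)).1.1 k :=
  Fout_congr τ fun i hi => branch_agree τ hwin x ℓ i (lt_of_le_of_lt hi hk)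

end AntiLoc

theorem stmt12 (A : Set (ℕ → ℕ)) (h : IIWinStratAntiLocStar A) :
    #A = Cardinal.continuum := by
  obtain ⟨τ, hτ⟩ := h
  have hwin : ∀ a, IsSlalom a → {k | AntiLoc.Fout τ a k ∉ a k}.Infinite :=
    fun a ha => (hτ a ha).2
  have hmem : ∀ a, IsSlalom a → AntiLoc.Fout τ a ∈ A := fun a ha => (hτ a ha).1
  refine le_antisymm ?_ ?_
  · calc #A ≤ #(ℕ → ℕ) := Cardinal.mk_set_le A
      _ = #ℕ ^ #ℕ := (Cardinal.power_def ℕ ℕ).symm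
      _ = Cardinal.continuum := by
        rw [Cardinal.mk_nat]; exact Cardinal.aleph0_power_aleph0
  · have hG : Function.Injective
        (fun x : ℕ → Bool => (⟨AntiLoc.Fout τ (AntiLoc.branch τ hwin x),
          hmem _ (AntiLoc.branch_slalom τ hwin x)⟩ : A)) := by
      intro x y hxy
      by_contra hne
      have hex : ∃ n, x n ≠ y n := by
        by_contra hc
        push_neg at hc
        exact hne (funext hc)
      have hdiff : x (Nat.find hex) ≠ y (Nat.find hex) := Nat.find_spec hex
      have hbelow : ∀ i < Nat.find hex, x i = y i := fun i hi => by
        by_contra hc; exact Nat.find_min hex hi hc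
      have hseg : AntiLoc.seg x (Nat.find hex) = AntiLoc.seg y (Nat.find hex) :=
        AntiLoc.seg_eq x y hbelow
      obtain ⟨k, hkt, hkf, hk⟩ := AntiLoc.node_split τ hwin (AntiLoc.seg x (Nat.find hex))
      have key : ∀ z : ℕ → Bool, AntiLoc.seg z (Nat.find hex) = AntiLoc.seg x (Nat.find hex) →
          AntiLoc.Fout τ (AntiLoc.branch τ hwin z) k
            = AntiLoc.Fout τ (AntiLoc.node τ hwin
                (z (Nat.find hex) :: AntiLoc.seg x (Nat.find hex))).1.1 k := by
        intro z hz
        have hzs : AntiLoc.seg z (Nat.find hex + 1)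
            = z (Nat.find hex) :: AntiLoc.seg x (Nat.find hex) := by
          rw [AntiLoc.seg, hz]
        have hk' : k < (AntiLoc.node τ hwin (AntiLoc.seg z (Nat.find hex + 1))).2 := by
          rw [hzs]
          cases z (Nat.find hex)
          · exact hkf
          · exact hkt
        rw [AntiLoc.branch_Fout τ hwin z (Nat.find hex + 1) k hk', hzs]
      have heq : AntiLoc.Fout τ (AntiLoc.branch τ hwin x)
          = AntiLoc.Fout τ (AntiLoc.branch τ hwin y) := congrArg Subtype.val hxy
      have hkeq := (key x rfl).symm.trans ((congrFun heq k).trans (key y hseg.symm))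
      cases hbx : x (Nat.find hex) <;> cases hby : y (Nat.find hex)
      · exact hdiff (hbx.trans hby.symm)
      · rw [hbx, hby] at hkeq; exact hk hkeq.symm
      · rw [hbx, hby] at hkeq; exact hk hkeq
      · exact hdiff (hbx.trans hby.symm)
    calc Cardinal.continuum = 2 ^ Cardinal.aleph0 := Cardinal.two_power_aleph0.symm
      _ = #(ℕ → Bool) := by rw [← Cardinal.mk_nat, ← Cardinal.mk_bool, Cardinal.power_def]
      _ ≤ #A := Cardinal.mk_le_of_injective hG
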